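/- arXiv:1304.8043 — 2 statements merged into one kernel-verified Lean document; each statement's English description precedes it below -/
import Mathlib

section
/- Let φ_1,…,φ_k : B(H) → B(H) be pairwise commuting, power-bounded, positive linear maps, let Y ∈ B(H) be self-adjoint, and let p = (p_1,…,p_k) ∈ ℤ_+^k with p_i ≥ 1 for every i. Then the following are equivalent: (i) (id−φ_1)^{ε_1 p_1} ∘ ⋯ ∘ (id−φ_k)^{ε_k p_k}(Y) ≥ 0 for every ε = (ε_1,…,ε_k) ∈ {0,1}^k with ε ≠ 0; (ii) (id−φ_1)^{q_1} ∘ ⋯ ∘ (id−φ_k)^{q_k}(Y) ≥ 0 for every q = (q_1,…,q_k) ∈ ℤ_+^k with q ≤ p and q ≠ 0. -/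
open Filter Topology ContinuousLinearMap
open scoped InnerProductSpace

section core
variable {H : Type*} [NormedAddCommGroup H] [InnerProductSpace ℂ H] [CompleteSpace H]

lemma popescu_shift (A : H →L[ℂ] H) (hA : IsSelfAdjoint A) :
    (A + ‖A‖ • (1 : H →L[ℂ] H)).IsPositive := by
  have hsm : IsSelfAdjoint (‖A‖ • (1 : H →L[ℂ] H)) := by
    have : IsSelfAdjoint ((‖A‖ : ℂ) • (1 : H →L[ℂ] H)) := by
      rw [IsSelfAdjoint, star_smul]; simp
    simpa using this
  constructor
  · exact (hA.add hsm).isSymmetric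
  · intro x
    have h1 : ‖(⟪A x, x⟫_ℂ)‖ ≤ ‖A‖ * ‖x‖ * ‖x‖ :=
      (norm_inner_le_norm _ _).trans (by gcongr; exact A.le_opNorm x)
    have h4 : |(⟪A x, x⟫_ℂ).re| ≤ ‖(⟪A x, x⟫_ℂ)‖ := by
      exact Complex.abs_re_le_norm _
    have h2 : -(‖A‖ * ‖x‖ * ‖x‖) ≤ Complex.re (⟪A x, x⟫_ℂ) := by
      have := neg_abs_le (Complex.re (⟪A x, x⟫_ℂ)); linarith
    have h3 : (A + ‖A‖ • (1 : H →L[ℂ] H)).reApplyInnerSelf x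
        = Complex.re (⟪A x, x⟫_ℂ) + ‖A‖ * (‖x‖ * ‖x‖) := by
      have hs : ⟪(‖A‖ : ℝ) • x, x⟫_ℂ = (‖A‖ : ℂ) * ⟪x, x⟫_ℂ := by
        rw [← algebraMap_smul ℂ (‖A‖) x, inner_smul_left]; simp
      have hxx : ⟪x, x⟫_ℂ = ((‖x‖:ℂ))^2 := inner_self_eq_norm_sq_to_K x
      rw [reApplyInnerSelf]
      simp only [add_apply, smul_apply, one_apply_eq_self, inner_add_left, hs, hxx,
        ← Complex.ofReal_pow, ← Complex.ofReal_mul, RCLike.re_to_complex,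
        Complex.add_re, Complex.ofReal_re]
      ring
    rw [h3]
    nlinarith
end core

section core2
variable {H : Type*} [NormedAddCommGroup H] [InnerProductSpace ℂ H] [CompleteSpace H]
variable (ψ : (H →L[ℂ] H) →L[ℂ] (H →L[ℂ] H))

lemma popescu_sa_pres (hψ : ∀ A : H →L[ℂ] H, A.IsPositive → (ψ A).IsPositive)
    (A : H →L[ℂ] H) (hA : IsSelfAdjoint A) : IsSelfAdjoint (ψ A) := by
  have h1 := (hψ _ (popescu_shift A hA)).isSelfAdjoint
  have h2 := (hψ 1 isPositive_one).isSelfAdjoint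
  have hsm : IsSelfAdjoint (‖A‖ • ψ 1) := by
    have : IsSelfAdjoint ((‖A‖ : ℂ) • ψ 1) := by
      rw [IsSelfAdjoint, star_smul, h2]; norm_num
    simpa using this
  have hrw : ψ A = ψ (A + ‖A‖ • (1 : H →L[ℂ] H)) - ‖A‖ • ψ 1 := by
    rw [map_add, map_smul_of_tower]; abel
  rw [hrw]
  exact h1.sub hsm

lemma popescu_pow_pos (hψ : ∀ A : H →L[ℂ] H, A.IsPositive → (ψ A).IsPositive) (n : ℕ) :
    ∀ A : H →L[ℂ] H, A.IsPositive → ((ψ ^ n) A).IsPositive := by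
  induction n with
  | zero => intro A hA; simpa using hA
  | succ n ih =>
      intro A hA
      rw [pow_succ, mul_apply_eq_comp]
      exact ih _ (hψ _ hA)

lemma popescu_telescope (hψ : ∀ A : H →L[ℂ] H, A.IsPositive → (ψ A).IsPositive)
    (Z : H →L[ℂ] H) (hZ : (Z - ψ Z).IsPositive) (n : ℕ) :
    (Z - (ψ ^ n) Z).IsPositive := by
  induction n with
  | zero => simpa using isPositive_zero
  | succ n ih =>
      have hrw : Z - (ψ ^ (n+1)) Z = (Z - (ψ ^ n) Z) + (ψ ^ n) (Z - ψ Z) := by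
        rw [map_sub, pow_succ, mul_apply_eq_comp]; abel
      rw [hrw]
      exact ih.add (popescu_pow_pos ψ hψ n _ hZ)

/-- Core analytic lemma: if `Z = W - ψ W` is self-adjoint and `Z - ψ Z ≥ 0`, with
`ψ` positive and power bounded, then `Z ≥ 0`. -/
lemma popescu_core (hψ : ∀ A : H →L[ℂ] H, A.IsPositive → (ψ A).IsPositive)
    {M : ℝ} (hM : ∀ n : ℕ, ‖ψ ^ n‖ ≤ M)
    (W : H →L[ℂ] H) (hsa : IsSelfAdjoint (W - ψ W))
    (hstep : ((W - ψ W) - ψ (W - ψ W)).IsPositive) :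
    (W - ψ W).IsPositive := by
  set Z := W - ψ W with hZdef
  refine ⟨hsa.isSymmetric, fun x => ?_⟩
  set s : ℝ := Z.reApplyInnerSelf x with hsdef
  by_contra hneg
  push_neg at hneg
  set c : ℕ → ℝ := fun n => Complex.re (⟪((ψ ^ n) W) x, x⟫_ℂ) with hcdef
  have hbound : ∀ n, c n ≤ M * ‖W‖ * (‖x‖ * ‖x‖) := by
    intro n
    have h4 : |(⟪((ψ ^ n) W) x, x⟫_ℂ).re| ≤ ‖(⟪((ψ ^ n) W) x, x⟫_ℂ)‖ := by
      exact Complex.abs_re_le_norm _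
    have h5 : ‖(⟪((ψ ^ n) W) x, x⟫_ℂ)‖ ≤ (M * ‖W‖) * (‖x‖ * ‖x‖) := by
      refine (norm_inner_le_norm _ _).trans ?_
      have h7 : ‖(ψ ^ n) W‖ ≤ M * ‖W‖ :=
        ((ψ ^ n).le_opNorm W).trans (mul_le_mul_of_nonneg_right (hM n) (norm_nonneg W))
      have h6 : ‖((ψ ^ n) W) x‖ ≤ (M * ‖W‖) * ‖x‖ :=
        (((ψ ^ n) W).le_opNorm x).trans (mul_le_mul_of_nonneg_right h7 (norm_nonneg x))
      calc ‖((ψ ^ n) W) x‖ * ‖x‖ ≤ ((M * ‖W‖) * ‖x‖) * ‖x‖ := by gcongr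
        _ = (M * ‖W‖) * (‖x‖ * ‖x‖) := by ring
    have := abs_le.mp (h4.trans h5)
    linarith [this.2]
  have hkey : ∀ n : ℕ, c n - c (n + 1) ≤ s := by
    intro n
    have hpos := (popescu_telescope ψ hψ Z hstep n).2 x
    have hexp : (Z - (ψ ^ n) Z).reApplyInnerSelf x = s - (c n - c (n + 1)) := by
      have h8 : (ψ ^ n) Z = (ψ ^ n) W - (ψ ^ (n+1)) W := by
        rw [hZdef, map_sub, pow_succ, mul_apply_eq_comp]
      rw [hsdef, hcdef]
      simp only [reApplyInnerSelf, sub_apply, h8, inner_sub_left, map_sub,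
        RCLike.re_to_complex]
    rw [hexp] at hpos
    linarith
  have hlow : ∀ n : ℕ, c 0 + n * (-s) ≤ c n := by
    intro n
    induction n with
    | zero => simp
    | succ n ih =>
        have := hkey n
        push_cast
        push_cast at ih
        linarith
  obtain ⟨n, hn⟩ := exists_nat_gt ((M * ‖W‖ * (‖x‖ * ‖x‖) - c 0) / (-s))
  have hns : (M * ‖W‖ * (‖x‖ * ‖x‖) - c 0) < n * (-s) := by
    rw [div_lt_iff₀ (by linarith : (0:ℝ) < -s)] at hn
    linarith
  have := hlow n
  have := hbound n
  linarith

lemma popescu_down (hψ : ∀ A : H →L[ℂ] H, A.IsPositive → (ψ A).IsPositive)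
    {M : ℝ} (hM : ∀ n : ℕ, ‖ψ ^ n‖ ≤ M)
    (X : H →L[ℂ] H) (hX : IsSelfAdjoint X) {a b : ℕ} (ha : 1 ≤ a) (hab : a ≤ b)
    (hb : (((1 - ψ) ^ b) X).IsPositive) : (((1 - ψ) ^ a) X).IsPositive := by
  have hsa : ∀ m : ℕ, IsSelfAdjoint (((1 - ψ) ^ m) X) := by
    intro m
    induction m with
    | zero => simpa using hX
    | succ m ih =>
        rw [pow_succ', mul_apply_eq_comp, sub_apply, one_apply_eq_self]
        exact ih.sub (popescu_sa_pres ψ hψ _ ih)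
  have hstep : ∀ m : ℕ, 1 ≤ m → (((1 - ψ) ^ (m + 1)) X).IsPositive →
      (((1 - ψ) ^ m) X).IsPositive := by
    intro m hm hpos1
    obtain ⟨n, rfl⟩ : ∃ n, m = n + 1 := ⟨m - 1, (Nat.succ_pred_eq_of_pos hm).symm⟩
    set W : H →L[ℂ] H := ((1 - ψ) ^ n) X with hW
    have hZ : ((1 - ψ) ^ (n + 1)) X = W - ψ W := by
      rw [pow_succ', mul_apply_eq_comp, sub_apply, one_apply_eq_self]
    have hZstep : ((1 - ψ) ^ (n + 2)) X = (W - ψ W) - ψ (W - ψ W) := by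
      rw [show n + 2 = (n + 1) + 1 from rfl, pow_succ', mul_apply_eq_comp, hZ, sub_apply, one_apply_eq_self]
    rw [hZ]
    refine popescu_core ψ hψ hM W ?_ ?_
    · rw [← hZ]; exact hsa (n + 1)
    · rw [← hZstep]; exact hpos1
  have main : ∀ b, a ≤ b → (((1 - ψ) ^ b) X).IsPositive → (((1 - ψ) ^ a) X).IsPositive := by
    intro b hab
    induction b, hab using Nat.le_induction with
    | base => exact id
    | succ b hab ih => exact fun h => ih (hstep b (ha.trans hab) h)
  exact main b hab hb

lemma popescu_pow_sub_sa (hψ : ∀ A : H →L[ℂ] H, A.IsPositive → (ψ A).IsPositive)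
    (X : H →L[ℂ] H) (hX : IsSelfAdjoint X) (m : ℕ) :
    IsSelfAdjoint (((1 - ψ) ^ m) X) := by
  induction m with
  | zero => simpa using hX
  | succ m ih =>
      rw [pow_succ', mul_apply_eq_comp, sub_apply, one_apply_eq_self]
      exact ih.sub (popescu_sa_pres ψ hψ _ ih)

end core2

lemma popescu_extract {M : Type*} [Monoid M] :
    ∀ {k : ℕ} (g : Fin k → M) (i : Fin k), (∀ j, Commute (g i) (g j)) →
      (List.ofFn g).prod = g i * (List.ofFn fun j => if j = i then 1 else g j).prod := by
  intro k
  induction k with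
  | zero => exact fun g i => i.elim0
  | succ k ih =>
      intro g i hc
      induction i using Fin.cases with
      | zero =>
          simp [List.ofFn_succ, Fin.succ_ne_zero]
      | succ i =>
          rw [List.ofFn_succ, List.prod_cons,
            ih (fun j => g j.succ) i (fun j => hc j.succ)]
          have h2 : (List.ofFn fun j : Fin (k+1) => if j = i.succ then 1 else g j)
              = (if (0 : Fin (k+1)) = i.succ then 1 else g 0) ::
                List.ofFn (fun j : Fin k => if j = i then 1 else g j.succ) := by
            have h3 : (fun j : Fin k => if j.succ = i.succ then 1 else g j.succ)
                = (fun j : Fin k => if j = i then 1 else g j.succ) := by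
              funext j; simp [Fin.succ_inj]
            rw [List.ofFn_succ, h3]
          rw [h2, List.prod_cons, if_neg ((Fin.succ_ne_zero i).symm : ¬(0 : Fin (k+1)) = i.succ)]
          rw [← mul_assoc, ← mul_assoc, (hc 0).eq]

lemma popescu_prod_sa {H : Type*} [NormedAddCommGroup H] [InnerProductSpace ℂ H]
    [CompleteSpace H] :
    ∀ (l : List ((H →L[ℂ] H) →L[ℂ] (H →L[ℂ] H))),
      (∀ a ∈ l, ∀ X : H →L[ℂ] H, IsSelfAdjoint X → IsSelfAdjoint (a X)) →
      ∀ X : H →L[ℂ] H, IsSelfAdjoint X → IsSelfAdjoint (l.prod X) := by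
  intro l
  induction l with
  | nil => intro _ X hX; simpa using hX
  | cons a l ih =>
      intro h X hX
      rw [List.prod_cons, mul_apply_eq_comp]
      exact h a List.mem_cons_self _ (ih (fun b hb => h b (List.mem_cons_of_mem a hb)) X hX)

/-- **Proposition 1.1 (Popescu).**  Let `φ_1, …, φ_k : B(H) → B(H)` be pairwise commuting,
power-bounded, positive linear maps, let `Y ∈ B(H)` be self-adjoint and let
`p = (p_1, …, p_k) ∈ ℤ₊^k` with `p_i ≥ 1` for every `i`.  Then
`(id−φ_1)^{ε_1 p_1} ∘ ⋯ ∘ (id−φ_k)^{ε_k p_k}(Y) ≥ 0` for every `ε ∈ {0,1}^k`, `ε ≠ 0`,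
if and only if `(id−φ_1)^{q_1} ∘ ⋯ ∘ (id−φ_k)^{q_k}(Y) ≥ 0` for every `q ∈ ℤ₊^k` with
`q ≤ p`, `q ≠ 0`. -/
theorem stmt_0 {H : Type*} [NormedAddCommGroup H] [InnerProductSpace ℂ H] [CompleteSpace H]
    {k : ℕ} (φ : Fin k → ((H →L[ℂ] H) →L[ℂ] (H →L[ℂ] H)))
    (hpos : ∀ i (A : H →L[ℂ] H), A.IsPositive → ((φ i) A).IsPositive)
    (hpb : ∀ i, ∃ M > (0 : ℝ), ∀ N : ℕ, ‖(φ i) ^ N‖ ≤ M)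
    (hcomm : ∀ i j, Commute (φ i) (φ j))
    (Y : H →L[ℂ] H) (hY : IsSelfAdjoint Y)
    (p : Fin k → ℕ) (hp : ∀ i, 1 ≤ p i) :
    (∀ ε : Fin k → Bool, ε ≠ (fun _ => false) →
        (((List.ofFn fun i =>
            ((1 : (H →L[ℂ] H) →L[ℂ] (H →L[ℂ] H)) - φ i) ^ (if ε i then p i else 0)).prod)
          Y).IsPositive)
      ↔ (∀ q : Fin k → ℕ, (∀ i, q i ≤ p i) → q ≠ 0 →
        (((List.ofFn fun i =>
            ((1 : (H →L[ℂ] H) →L[ℂ] (H →L[ℂ] H)) - φ i) ^ (q i)).prod)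
          Y).IsPositive) := by
  classical
  let G : (Fin k → ℕ) → (H →L[ℂ] H) := fun e =>
    ((List.ofFn fun j =>
      ((1 : (H →L[ℂ] H) →L[ℂ] (H →L[ℂ] H)) - φ j) ^ e j).prod) Y
  have hTcomm : ∀ i j, Commute ((1 : (H →L[ℂ] H) →L[ℂ] (H →L[ℂ] H)) - φ i)
      ((1 : (H →L[ℂ] H) →L[ℂ] (H →L[ℂ] H)) - φ j) := fun i j =>
    (Commute.one_left _).sub_left ((Commute.one_right (φ i)).sub_right (hcomm i j))
  have hGsa : ∀ e : Fin k → ℕ, IsSelfAdjoint (G e) := by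
    intro e
    refine popescu_prod_sa _ ?_ Y hY
    intro a ha X hX
    obtain ⟨j, rfl⟩ := List.mem_ofFn.mp ha
    exact popescu_pow_sub_sa (φ j) (hpos j) X hX (e j)
  have hGext : ∀ (e : Fin k → ℕ) (i : Fin k),
      G e = (((1 : (H →L[ℂ] H) →L[ℂ] (H →L[ℂ] H)) - φ i) ^ e i)
        (G (Function.update e i 0)) := by
    intro e i
    have hc : ∀ j, Commute
        (((1 : (H →L[ℂ] H) →L[ℂ] (H →L[ℂ] H)) - φ i) ^ e i)
        (((1 : (H →L[ℂ] H) →L[ℂ] (H →L[ℂ] H)) - φ j) ^ e j) :=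
      fun j => (hTcomm i j).pow_pow _ _
    have h1 := popescu_extract
      (fun j => ((1 : (H →L[ℂ] H) →L[ℂ] (H →L[ℂ] H)) - φ j) ^ e j) i hc
    have h2 : (fun j => if j = i then (1 : (H →L[ℂ] H) →L[ℂ] (H →L[ℂ] H))
          else ((1 : (H →L[ℂ] H) →L[ℂ] (H →L[ℂ] H)) - φ j) ^ e j)
        = fun j => ((1 : (H →L[ℂ] H) →L[ℂ] (H →L[ℂ] H)) - φ j)
            ^ (Function.update e i 0 j) := by
      funext j
      by_cases h : j = i
      · subst h; simp
      · simp [h, Function.update_of_ne h]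
    show ((List.ofFn fun j =>
        ((1 : (H →L[ℂ] H) →L[ℂ] (H →L[ℂ] H)) - φ j) ^ e j).prod) Y = _
    rw [h1, h2, mul_apply_eq_comp]
  have hstep : ∀ (e : Fin k → ℕ) (i : Fin k) (a : ℕ), 1 ≤ a → a ≤ e i →
      (G e).IsPositive → (G (Function.update e i a)).IsPositive := by
    intro e i a ha hae hposG
    obtain ⟨M, hM0, hM⟩ := hpb i
    have h3 : Function.update (Function.update e i a) i 0 = Function.update e i 0 := by
      simp
    rw [hGext (Function.update e i a) i, Function.update_self, h3]
    rw [hGext e i] at hposG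
    exact popescu_down (φ i) (hpos i) hM _ (hGsa _) ha hae hposG
  constructor
  · intro h1 q hqp hq0
    set r0 : Fin k → ℕ := fun j => if q j = 0 then 0 else p j with hr0
    have key : ∀ m : ℕ, m ≤ k →
        (G (fun j => if (j : ℕ) < m then q j else r0 j)).IsPositive := by
      intro m
      induction m with
      | zero =>
          intro _
          have hfun : (fun j : Fin k => if (j : ℕ) < 0 then q j else r0 j)
              = (fun j : Fin k => if (q j != 0) then p j else 0) := by
            funext j
            by_cases h : q j = 0 <;> simp [hr0, h]
          rw [hfun]
          refine h1 (fun j => q j != 0) ?_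
          intro hcon
          obtain ⟨j, hj⟩ := Function.ne_iff.mp hq0
          have h5 := congrFun hcon j
          simp at h5
          exact hj (by simpa using h5)
      | succ m ih =>
          intro hm1
          have hmk : m < k := hm1
          set i : Fin k := ⟨m, hmk⟩ with hi
          have hih := ih (Nat.le_of_succ_le hm1)
          by_cases hq : q i = 0
          · have hfun : (fun j : Fin k => if (j : ℕ) < m + 1 then q j else r0 j)
                = (fun j : Fin k => if (j : ℕ) < m then q j else r0 j) := by
              funext j
              by_cases hj : (j : ℕ) = m
              · have hji : j = i := Fin.ext hj
                rw [if_pos (by omega), if_neg (by omega), hji, hq, hr0]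
                simp [hq]
              · have hiff : ((j : ℕ) < m + 1) ↔ ((j : ℕ) < m) := by omega
                simp [hiff]
            rw [hfun]
            exact hih
          · have hfun : (fun j : Fin k => if (j : ℕ) < m + 1 then q j else r0 j)
                = Function.update (fun j : Fin k => if (j : ℕ) < m then q j else r0 j)
                    i (q i) := by
              funext j
              by_cases hj : j = i
              · subst hj
                rw [Function.update_self, if_pos (by simp [hi])]
              · rw [Function.update_of_ne hj]
                have hjm : (j : ℕ) ≠ m := by
                  intro hc; exact hj (Fin.ext (by simp [hi, hc]))
                have hiff : ((j : ℕ) < m + 1) ↔ ((j : ℕ) < m) := by omega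
                simp [hiff]
            rw [hfun]
            refine hstep _ i (q i) (Nat.one_le_iff_ne_zero.mpr hq) ?_ hih
            have : (i : ℕ) = m := rfl
            simp [this, hr0, hq]
            exact hqp i
    have hfin := key k le_rfl
    have hfun : (fun j : Fin k => if (j : ℕ) < k then q j else r0 j) = q := by
      funext j; exact if_pos j.isLt
    rw [hfun] at hfin
    exact hfin
  · intro h2 ε hε
    refine h2 (fun i => if ε i then p i else 0) (fun i => ?_) ?_
    · by_cases h : ε i <;> simp [h]
    · obtain ⟨j, hj⟩ := Function.ne_iff.mp hε
      have hjt : ε j = true := by simpa using hj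
      refine Function.ne_iff.mpr ⟨j, ?_⟩
      simp [hjt]
      have := hp j
      omega
end

section
/- Let Y ∈ B(H) be self-adjoint, let m ∈ ℤ_+^k with m ≠ 0, and let Φ = (φ_1,…,φ_k) be a k-tuple of pairwise commuting, power-bounded, positive linear maps on B(H) such that (i) Δ_Φ^m(Y) ≥ 0 and (ii) each φ_i is pure, i.e. φ_i^p(I) → 0 in the strong operator topology as p → ∞. Then Δ_Φ^q(Y) ≥ 0 for every q ∈ ℤ_+^k with q ≤ m; in particular Y ≥ 0. -/
open Filter Topology
open scoped InnerProductSpace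
set_option synthInstance.maxHeartbeats 1000000
set_option maxHeartbeats 1000000

/-- `Δ_Φ^p := (id − φ_1)^{p_1} ∘ ⋯ ∘ (id − φ_k)^{p_k}` for a `k`-tuple of bounded linear
maps on `B(H)`. -/
noncomputable def DeltaCLM {H : Type*} [NormedAddCommGroup H] [InnerProductSpace ℂ H]
    {k : ℕ} (φ : Fin k → ((H →L[ℂ] H) →L[ℂ] (H →L[ℂ] H))) (p : Fin k → ℕ) :
    (H →L[ℂ] H) →L[ℂ] (H →L[ℂ] H) :=
  (List.ofFn fun i => ((1 : (H →L[ℂ] H) →L[ℂ] (H →L[ℂ] H)) - φ i) ^ (p i)).prod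

section Aux

variable {H : Type*} [NormedAddCommGroup H] [InnerProductSpace ℂ H] [CompleteSpace H]

local notation "𝔅" => H →L[ℂ] H

lemma re_ofReal_mul' (r : ℝ) (z : ℂ) :
    RCLike.re ((r : ℂ) * z) = r * RCLike.re z := by
  simp [RCLike.re_to_complex]

lemma smul_one_isPositive {c : ℝ} (hc : 0 ≤ c) : ((c : ℂ) • (1 : 𝔅)).IsPositive := by
  rw [ContinuousLinearMap.isPositive_def']
  constructor
  · show star _ = _
    rw [star_smul, star_one]
    simp [Complex.conj_ofReal]
  · intro x
    rw [ContinuousLinearMap.reApplyInnerSelf]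
    simp only [ContinuousLinearMap.smul_apply, ContinuousLinearMap.one_apply, inner_smul_left,
      Complex.conj_ofReal]
    rw [re_ofReal_mul', inner_self_eq_norm_sq]
    positivity

lemma re_inner_abs_le (X : 𝔅) (x : H) :
    |RCLike.re (⟪X x, x⟫_ℂ)| ≤ ‖X‖ * ‖x‖ ^ 2 := by
  calc |RCLike.re (⟪X x, x⟫_ℂ)| ≤ ‖(⟪X x, x⟫_ℂ)‖ := RCLike.abs_re_le_norm _
    _ ≤ ‖X x‖ * ‖x‖ := norm_inner_le_norm _ _
    _ ≤ ‖X‖ * ‖x‖ * ‖x‖ := mul_le_mul_of_nonneg_right (X.le_opNorm x) (norm_nonneg x)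
    _ = ‖X‖ * ‖x‖ ^ 2 := by ring

lemma shift_isPositive (X : 𝔅) (hX : IsSelfAdjoint X) :
    ((‖X‖ : ℂ) • (1 : 𝔅) + X).IsPositive := by
  rw [ContinuousLinearMap.isPositive_def']
  constructor
  · exact ((smul_one_isPositive (norm_nonneg X)).isSelfAdjoint).add hX
  · intro x
    rw [ContinuousLinearMap.reApplyInnerSelf]
    simp only [ContinuousLinearMap.add_apply, ContinuousLinearMap.smul_apply,
      ContinuousLinearMap.one_apply, inner_add_left, inner_smul_left, Complex.conj_ofReal, map_add]
    rw [re_ofReal_mul', inner_self_eq_norm_sq]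
    have h2 := re_inner_abs_le X x
    have h3 := neg_abs_le (RCLike.re (⟪X x, x⟫_ℂ))
    linarith

/-- A positive map preserves self-adjointness. -/
lemma posmap_selfAdjoint (ψ : 𝔅 →L[ℂ] 𝔅)
    (hψ : ∀ A : 𝔅, A.IsPositive → (ψ A).IsPositive)
    (X : 𝔅) (hX : IsSelfAdjoint X) : IsSelfAdjoint (ψ X) := by
  have h1 := (hψ _ (shift_isPositive X hX)).isSelfAdjoint
  have h2 := (hψ _ (smul_one_isPositive (norm_nonneg X))).isSelfAdjoint
  have hx : ψ X = ψ ((‖X‖ : ℂ) • (1 : 𝔅) + X) - ψ ((‖X‖ : ℂ) • (1 : 𝔅)) := by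
    rw [map_add]; abel
  rw [hx]
  exact h1.sub h2

/-- Powers of a positive map are positive maps. -/
lemma posmap_pow (ψ : 𝔅 →L[ℂ] 𝔅) (hψ : ∀ A : 𝔅, A.IsPositive → (ψ A).IsPositive)
    (n : ℕ) : ∀ A : 𝔅, A.IsPositive → ((ψ ^ n) A).IsPositive := by
  induction n with
  | zero => intro A hA; simpa using hA
  | succ n ih =>
      intro A hA
      rw [pow_succ', ContinuousLinearMap.mul_apply]
      exact hψ _ (ih A hA)

/-- Key single-map lemma: if `ψ` is positive and pure, `X` self-adjoint with
`(1 - ψ)(X) ≥ 0`, then `X ≥ 0`. -/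
lemma key_lemma (ψ : 𝔅 →L[ℂ] 𝔅)
    (hψ : ∀ A : 𝔅, A.IsPositive → (ψ A).IsPositive)
    (hpure : ∀ x : H, Tendsto (fun n : ℕ => ((ψ ^ n) (1 : 𝔅)) x) atTop (𝓝 0))
    (X : 𝔅) (hX : IsSelfAdjoint X) (hD : (X - ψ X).IsPositive) : X.IsPositive := by
  refine ⟨ContinuousLinearMap.isSelfAdjoint_iff_isSymmetric.mp hX, fun x => ?_⟩
  set a : ℕ → ℝ := fun n => RCLike.re (⟪((ψ ^ n) X) x, x⟫_ℂ) with ha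
  set b : ℕ → ℝ := fun n => RCLike.re (⟪((ψ ^ n) (1 : 𝔅)) x, x⟫_ℂ) with hb
  have hstep : ∀ n, a (n + 1) ≤ a n := by
    intro n
    have hpos := (posmap_pow ψ hψ n _ hD).2 x
    rw [ContinuousLinearMap.reApplyInnerSelf] at hpos
    have heq : (ψ ^ n) (X - ψ X) = (ψ ^ n) X - (ψ ^ (n + 1)) X := by
      rw [map_sub, pow_succ, ContinuousLinearMap.mul_apply]
    rw [heq] at hpos
    simp only [ContinuousLinearMap.sub_apply, inner_sub_left, map_sub] at hpos
    simp only [ha]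
    linarith
  have hanti : ∀ n, a n ≤ a 0 := by
    intro n
    induction n with
    | zero => exact le_refl _
    | succ n ih => exact le_trans (hstep n) ih
  have hlow : ∀ n, -(‖X‖ * b n) ≤ a n := by
    intro n
    have hpos := (posmap_pow ψ hψ n _ (shift_isPositive X hX)).2 x
    rw [ContinuousLinearMap.reApplyInnerSelf, map_add, map_smul] at hpos
    simp only [ContinuousLinearMap.add_apply, ContinuousLinearMap.smul_apply, inner_add_left,
      inner_smul_left, Complex.conj_ofReal, map_add] at hpos
    rw [re_ofReal_mul'] at hpos
    simp only [ha, hb]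
    linarith
  have hbt : Tendsto b atTop (𝓝 0) := by
    have h1 : Tendsto (fun n : ℕ => (⟪((ψ ^ n) (1 : 𝔅)) x, x⟫_ℂ)) atTop (𝓝 0) := by
      have := Filter.Tendsto.inner (𝕜 := ℂ) (hpure x) (tendsto_const_nhds (x := x))
      simpa using this
    have := (RCLike.continuous_re.tendsto (0 : ℂ)).comp h1
    simpa [hb, Function.comp_def] using this
  have hnbt : Tendsto (fun n => -(‖X‖ * b n)) atTop (𝓝 0) := by
    have := (hbt.const_mul ‖X‖).neg
    simpa using this
  have h0 : (0 : ℝ) ≤ a 0 := by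
    have hall : ∀ n, -(‖X‖ * b n) ≤ a 0 := fun n => le_trans (hlow n) (hanti n)
    exact le_of_tendsto hnbt (Filter.Eventually.of_forall hall)
  rw [ContinuousLinearMap.reApplyInnerSelf]
  simpa [ha] using h0

end Aux

section Delta

variable {H : Type*} [NormedAddCommGroup H] [InnerProductSpace ℂ H]

variable {k : ℕ} (φ : Fin k → ((H →L[ℂ] H) →L[ℂ] (H →L[ℂ] H)))

lemma commute_one_sub (hcomm : ∀ i j, Commute (φ i) (φ j)) (i j : Fin k) :
    Commute (1 - φ i) (1 - φ j) := by
  have h1 : Commute (1 - φ i) (φ j) := (Commute.one_left (φ j)).sub_left (hcomm i j)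
  have h2 : Commute (1 - φ i) (1 : (H →L[ℂ] H) →L[ℂ] (H →L[ℂ] H)) := Commute.one_right _
  exact h2.sub_right h1

lemma delta_eq_noncommProd (hcomm : ∀ i j, Commute (φ i) (φ j)) (p : Fin k → ℕ) :
    DeltaCLM φ p = Finset.univ.noncommProd (fun i => (1 - φ i) ^ (p i))
      (show (↑(Finset.univ : Finset (Fin k)) : Set (Fin k)).Pairwise
        (Function.onFun Commute fun i => (1 - φ i) ^ (p i))
        from fun i _ j _ _ => (commute_one_sub φ hcomm i j).pow_pow _ _) := by
  rw [DeltaCLM]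
  unfold Finset.noncommProd
  rw [Fin.univ_def]
  rw [List.ofFn_eq_map]
  exact (Multiset.noncommProd_coe (List.map (fun i => (1 - φ i) ^ (p i)) (List.finRange k)) _).symm

lemma delta_extract (hcomm : ∀ i j, Commute (φ i) (φ j)) (p : Fin k → ℕ) (i : Fin k)
    (hi : 0 < p i) :
    DeltaCLM φ p = (1 - φ i) * DeltaCLM φ (Function.update p i (p i - 1)) := by
  rw [delta_eq_noncommProd φ hcomm, delta_eq_noncommProd φ hcomm]
  rw [← Finset.mul_noncommProd_erase Finset.univ (Finset.mem_univ i)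
    (fun j => (1 - φ j) ^ (p j)) _]
  rw [← Finset.mul_noncommProd_erase Finset.univ (Finset.mem_univ i)
    (fun j => (1 - φ j) ^ (Function.update p i (p i - 1) j)) _]
  have hE : (Finset.univ.erase i).noncommProd (fun j => (1 - φ j) ^ (p j))
        (fun x hx y hy hxy => (fun i _ j _ _ => (commute_one_sub φ hcomm i j).pow_pow _ _)
          x (Finset.mem_of_mem_erase hx) y (Finset.mem_of_mem_erase hy) hxy)
      = (Finset.univ.erase i).noncommProd
        (fun j => (1 - φ j) ^ (Function.update p i (p i - 1) j))
        (fun x hx y hy hxy => (fun i _ j _ _ => (commute_one_sub φ hcomm i j).pow_pow _ _)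
          x (Finset.mem_of_mem_erase hx) y (Finset.mem_of_mem_erase hy) hxy) := by
    apply Finset.noncommProd_congr rfl
    intro j hj
    rw [Function.update_of_ne (Finset.ne_of_mem_erase hj)]
  rw [hE, Function.update_self]
  rw [← mul_assoc, ← pow_succ']
  congr 2
  omega

end Delta

/-- **Proposition 1.3 (Popescu).**  Let `Y ∈ B(H)` be self-adjoint, `m ∈ ℤ₊^k`, `m ≠ 0`,
and let `Φ = (φ_1, …, φ_k)` be a `k`-tuple of pairwise commuting, power-bounded, positive
linear maps on `B(H)` such that `Δ_Φ^m(Y) ≥ 0` and each `φ_i` is pure, i.e.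
`φ_i^p(I) → 0` strongly as `p → ∞`.  Then `Δ_Φ^q(Y) ≥ 0` for every `q ∈ ℤ₊^k` with
`q ≤ m`; in particular (taking `q = 0`) `Y ≥ 0`. -/
theorem stmt_2 {H : Type*} [NormedAddCommGroup H] [InnerProductSpace ℂ H] [CompleteSpace H]
    {k : ℕ} (φ : Fin k → ((H →L[ℂ] H) →L[ℂ] (H →L[ℂ] H)))
    (hpos : ∀ i (A : H →L[ℂ] H), A.IsPositive → ((φ i) A).IsPositive)
    (hpb : ∀ i, ∃ M > (0 : ℝ), ∀ N : ℕ, ‖(φ i) ^ N‖ ≤ M)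
    (hcomm : ∀ i j, Commute (φ i) (φ j))
    (Y : H →L[ℂ] H) (hY : IsSelfAdjoint Y)
    (m : Fin k → ℕ) (hm : m ≠ 0)
    (hDm : ((DeltaCLM φ m) Y).IsPositive)
    (hpure : ∀ i (x : H),
      Tendsto (fun p : ℕ => (((φ i) ^ p) (1 : H →L[ℂ] H)) x) atTop (𝓝 0)) :
    (∀ q : Fin k → ℕ, (∀ i, q i ≤ m i) → ((DeltaCLM φ q) Y).IsPositive) ∧ Y.IsPositive := by
  -- self-adjointness of DeltaCLM φ p Y for all p
  have hone_sub_saj : ∀ (i : Fin k) (A : H →L[ℂ] H), IsSelfAdjoint A →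
      IsSelfAdjoint ((1 - φ i) A) := by
    intro i A hA
    have := posmap_selfAdjoint (φ i) (hpos i) A hA
    simp only [ContinuousLinearMap.sub_apply, ContinuousLinearMap.one_apply]
    exact hA.sub this
  have hsaj : ∀ (p : Fin k → ℕ), IsSelfAdjoint ((DeltaCLM φ p) Y) := by
    intro p
    rw [DeltaCLM]
    have : ∀ (l : List (Fin k)),
        IsSelfAdjoint (((l.map fun i => (1 - φ i) ^ (p i)).prod) Y) := by
      intro l
      induction l with
      | nil => simpa using hY
      | cons i l ih =>
          rw [List.map_cons, List.prod_cons, ContinuousLinearMap.mul_apply]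
          -- (1 - φ i)^(p i) preserves selfadjoint
          have hpow : ∀ (n : ℕ) (A : H →L[ℂ] H), IsSelfAdjoint A →
              IsSelfAdjoint (((1 - φ i) ^ n) A) := by
            intro n
            induction n with
            | zero => intro A hA; simpa using hA
            | succ n ihn =>
                intro A hA
                rw [pow_succ', ContinuousLinearMap.mul_apply]
                exact hone_sub_saj i _ (ihn A hA)
          exact hpow _ _ ih
    rw [List.ofFn_eq_map]
    exact this _
  -- decrement step
  have hstep : ∀ (p : Fin k → ℕ) (i : Fin k), 0 < p i → ((DeltaCLM φ p) Y).IsPositive →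
      ((DeltaCLM φ (Function.update p i (p i - 1))) Y).IsPositive := by
    intro p i hi hp
    set X := (DeltaCLM φ (Function.update p i (p i - 1))) Y with hXdef
    have hXs : IsSelfAdjoint X := hsaj _
    have hXD : (X - (φ i) X).IsPositive := by
      have := delta_extract φ hcomm p i hi
      rw [this, ContinuousLinearMap.mul_apply] at hp
      simpa [ContinuousLinearMap.sub_apply, ContinuousLinearMap.one_apply] using hp
    exact key_lemma (φ i) (hpos i) (hpure i) X hXs hXD
  -- main induction
  have main : ∀ (n : ℕ) (q : Fin k → ℕ), (∀ i, q i ≤ m i) →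
      (∑ i, (m i - q i)) ≤ n → ((DeltaCLM φ q) Y).IsPositive := by
    intro n
    induction n with
    | zero =>
        intro q hq hsum
        have : q = m := by
          funext i
          have : m i - q i = 0 := by
            have := Finset.sum_eq_zero_iff.mp (Nat.le_zero.mp hsum) i (Finset.mem_univ i)
            exact this
          have h2 := hq i
          omega
        rw [this]; exact hDm
    | succ n ih =>
        intro q hq hsum
        by_cases hle : (∑ i, (m i - q i)) ≤ n
        · exact ih q hq hle
        · have hpos' : 0 < ∑ i, (m i - q i) := by omega
          obtain ⟨i, _, hi⟩ := Finset.exists_lt_of_sum_lt (f := fun _ => 0)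
            (g := fun i => m i - q i) (by simpa using hpos')
          have hqi : q i < m i := by omega
          set p := Function.update q i (q i + 1) with hpdef
          have hpm : ∀ j, p j ≤ m j := by
            intro j
            by_cases hji : j = i
            · subst hji
              rw [hpdef, Function.update_self]
              omega
            · simp [hpdef, Function.update_of_ne hji]; exact hq j
          have hsump : (∑ j, (m j - p j)) ≤ n := by
            have h1 : ∀ j, m j - p j = Function.update (fun j => m j - q j) i
                (m i - (q i + 1)) j := by
              intro j
              by_cases hji : j = i
              · subst hji; simp [hpdef, Function.update_self]
              · simp [hpdef, Function.update_of_ne hji]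
            calc (∑ j, (m j - p j))
                = ∑ j, Function.update (fun j => m j - q j) i (m i - (q i + 1)) j := by
                  exact Finset.sum_congr rfl fun j _ => h1 j
              _ = (m i - (q i + 1)) + ∑ j ∈ Finset.univ.erase i, (m j - q j) := by
                  rw [Finset.sum_update_of_mem (Finset.mem_univ i),
                    Finset.sdiff_singleton_eq_erase]
              _ ≤ n := by
                  have h2 : (∑ j, (m j - q j)) =
                      (m i - q i) + ∑ j ∈ Finset.univ.erase i, (m j - q j) := by
                    rw [← Finset.add_sum_erase _ _ (Finset.mem_univ i)]
                  omega
          have hpP := ih p hpm hsump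
          have hpi : 0 < p i := by simp [hpdef, Function.update_self]
          have := hstep p i hpi hpP
          have hback : Function.update p i (p i - 1) = q := by
            funext j
            by_cases hji : j = i
            · subst hji; simp [hpdef, Function.update_self]
            · simp [hpdef, Function.update_of_ne hji]
          rwa [hback] at this
  constructor
  · intro q hq
    exact main (∑ i, (m i - q i)) q hq le_rfl
  · have := main (∑ i, (m i - 0)) 0 (fun i => Nat.zero_le _) le_rfl
    have h0 : (DeltaCLM φ (0 : Fin k → ℕ)) Y = Y := by
      rw [DeltaCLM]
      simp
    rwa [h0] at this
end
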